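/- Let Q(x) = ∫_x^∞ (2π)^{−1/2} e^{−u²/2} du and Q^{−1} its inverse on (0,1). Let priors P_0, P_1 ≥ 0 with P_0 + P_1 = 1, δ ∈ (0,1), and for l ∈ {0,1} probabilities p_H(l), p_B(l) ∈ (0,1) with q := max{p_H(0), p_H(1)} < min{p_B(0), p_B(1)}. With η(T) = T·q + Q^{−1}(δ)·√(T·q(1−q)) and a(l,T) = Q( (η(T) − T·p_B(l)) / √(T·p_B(l)(1−p_B(l))) ), one has lim_{T→∞} Σ_{l∈{0,1}} P_l · a(l,T) = 1. That is, for a parallel network (a tree of depth K = 1), the proposed reputation-based scheme asymptotically identifies every Byzantine node with probability one. -/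
import Mathlib


open Filter MeasureTheory Set

/-- The standard Gaussian tail function `Q(x) = ∫ₓ^∞ (2π)^{-1/2} e^{-u²/2} du`. -/
noncomputable def gaussQ (x : ℝ) : ℝ :=
  ∫ u in Set.Ioi x, (Real.sqrt (2 * Real.pi))⁻¹ * Real.exp (-(u ^ 2) / 2)

lemma gauss_integrable :
    Integrable (fun u : ℝ => (Real.sqrt (2 * Real.pi))⁻¹ * Real.exp (-(u ^ 2) / 2)) := by
  have h := (integrable_exp_neg_mul_sq (show (0:ℝ) < 1/2 by norm_num)).const_mul
    (Real.sqrt (2 * Real.pi))⁻¹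
  refine h.congr (ae_of_all _ fun u => ?_)
  dsimp only
  rw [show -(1/2 : ℝ) * u ^ 2 = -(u ^ 2) / 2 from by ring]

lemma gauss_total :
    ∫ u : ℝ, (Real.sqrt (2 * Real.pi))⁻¹ * Real.exp (-(u ^ 2) / 2) = 1 := by
  have h1 : ∫ u : ℝ, Real.exp (-(u ^ 2) / 2) = Real.sqrt (2 * Real.pi) := by
    have h := integral_gaussian (1/2 : ℝ)
    have h2 : ∀ u : ℝ, -(1/2 : ℝ) * u ^ 2 = -(u ^ 2) / 2 := fun u => by ring
    simp only [h2] at h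
    rw [h]; norm_num [mul_comm]
  rw [integral_const_mul, h1]
  have : (0:ℝ) < Real.sqrt (2 * Real.pi) :=
    Real.sqrt_pos.2 (by positivity)
  field_simp

lemma gaussQ_tendsto : Tendsto gaussQ atBot (nhds 1) := by
  set f : ℝ → ℝ := fun u => (Real.sqrt (2 * Real.pi))⁻¹ * Real.exp (-(u ^ 2) / 2) with hf
  have hint := gauss_integrable
  have key : ∀ x : ℝ, gaussQ x = 1 - ∫ u in Iic x, f u := by
    intro x
    have := intervalIntegral.integral_Iic_add_Ioi (b := x) hint.integrableOn hint.integrableOn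
    rw [gauss_total] at this
    simp only [gaussQ, hf]
    linarith
  have h2 : Tendsto (fun x : ℝ => ∫ u in Iic x, f u) atBot (nhds 0) := by
    have h3 : Tendsto (fun x : ℝ => ∫ u in x..0, f u) atBot
        (nhds (∫ u in Iic (0:ℝ), f u)) :=
      intervalIntegral_tendsto_integral_Iic 0 hint.integrableOn tendsto_id
    have h4 : ∀ x : ℝ, ∫ u in Iic x, f u = (∫ u in Iic (0:ℝ), f u) - ∫ u in x..0, f u := by
      intro x
      have := intervalIntegral.integral_Iic_sub_Iic (a := x) (b := (0:ℝ)) (f := f)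
        hint.integrableOn hint.integrableOn
      linarith
    have h5 : Tendsto (fun x : ℝ => (∫ u in Iic (0:ℝ), f u) - ∫ u in x..0, f u) atBot
        (nhds ((∫ u in Iic (0:ℝ), f u) - ∫ u in Iic (0:ℝ), f u)) :=
      tendsto_const_nhds.sub h3
    rw [sub_self] at h5
    exact h5.congr fun x => (h4 x).symm
  have h6 : Tendsto (fun x : ℝ => 1 - ∫ u in Iic x, f u) atBot (nhds (1 - 0)) :=
    tendsto_const_nhds.sub h2
  rw [sub_zero] at h6
  exact h6.congr fun x => (key x).symm

lemma sqrt_tendsto_atTop : Filter.Tendsto Real.sqrt atTop atTop := by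
  refine tendsto_atTop_atTop.2 fun b => ⟨max (b ^ 2) 0, fun a ha => ?_⟩
  calc b ≤ |b| := le_abs_self b
    _ = Real.sqrt (b ^ 2) := (Real.sqrt_sq_eq_abs b).symm
    _ ≤ Real.sqrt a := Real.sqrt_le_sqrt (le_trans (le_max_left _ _) ha)

lemma arg_tendsto (p q c : ℝ) (hp0 : 0 < p) (hp1 : p < 1) (hq0 : 0 ≤ q) (hq1 : q ≤ 1)
    (hqp : q < p) :
    Tendsto (fun T : ℝ =>
      (T * q + c * Real.sqrt (T * q * (1 - q)) - T * p) / Real.sqrt (T * p * (1 - p)))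
      atTop atBot := by
  set s : ℝ := Real.sqrt (p * (1 - p)) with hs
  have hs0 : 0 < s := Real.sqrt_pos.2 (by nlinarith)
  set A : ℝ := (q - p) / s with hA
  set B : ℝ := c * Real.sqrt (q * (1 - q)) / s with hB
  have hA0 : A < 0 := div_neg_of_neg_of_pos (by linarith) hs0
  have hlim : Tendsto (fun T : ℝ => Real.sqrt T * A + B) atTop atBot := by
    apply tendsto_atBot_add_const_right
    exact (tendsto_mul_const_atBot_of_neg hA0).2 sqrt_tendsto_atTop
  refine hlim.congr' ?_
  filter_upwards [eventually_gt_atTop (0:ℝ)] with T hT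
  set u : ℝ := Real.sqrt T with hu
  have hu0 : 0 < u := Real.sqrt_pos.2 hT
  have huT : u * u = T := Real.mul_self_sqrt hT.le
  have h1 : Real.sqrt (T * q * (1 - q)) = u * Real.sqrt (q * (1 - q)) := by
    rw [show T * q * (1 - q) = u ^ 2 * (q * (1 - q)) by rw [sq, huT, mul_assoc],
      Real.sqrt_mul (sq_nonneg u), Real.sqrt_sq hu0.le]
  have h2 : Real.sqrt (T * p * (1 - p)) = u * s := by
    rw [show T * p * (1 - p) = u ^ 2 * (p * (1 - p)) by rw [sq, huT, mul_assoc],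
      Real.sqrt_mul (sq_nonneg u), Real.sqrt_sq hu0.le]
  rw [h1, h2, hA, hB, ← huT]
  field_simp
  ring

/-- For a parallel network (tree of depth `K = 1`), the reputation-based scheme
asymptotically identifies every Byzantine with probability one:
`lim_{T→∞} ∑_l P_l a(l,T) = 1`. -/
theorem stmt_19
    (Qinv : ℝ → ℝ) (hQinv : ∀ y ∈ Set.Ioo (0 : ℝ) 1, gaussQ (Qinv y) = y)
    (P0 P1 : ℝ) (hP0 : 0 ≤ P0) (hP1 : 0 ≤ P1) (hP : P0 + P1 = 1)
    (δ : ℝ) (hδ : δ ∈ Set.Ioo (0 : ℝ) 1)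
    (pH pB : ℕ → ℝ)
    (hpH : ∀ l < 2, pH l ∈ Set.Ioo (0 : ℝ) 1)
    (hpB : ∀ l < 2, pB l ∈ Set.Ioo (0 : ℝ) 1)
    (q : ℝ) (hq : q = max (pH 0) (pH 1))
    (hqpB : q < min (pB 0) (pB 1))
    (η : ℝ → ℝ)
    (hη : ∀ T : ℝ, η T = T * q + Qinv δ * Real.sqrt (T * q * (1 - q)))
    (a : ℕ → ℝ → ℝ)
    (ha : ∀ l < 2, ∀ T : ℝ,
      a l T = gaussQ ((η T - T * pB l) / Real.sqrt (T * pB l * (1 - pB l)))) :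
    Tendsto (fun T : ℝ => P0 * a 0 T + P1 * a 1 T) atTop (nhds 1) := by
  have hH0 := hpH 0 (by norm_num)
  have hH1 := hpH 1 (by norm_num)
  have hq0 : 0 ≤ q := hq ▸ le_max_iff.2 (Or.inl hH0.1.le)
  have hq1 : q ≤ 1 := hq ▸ max_le hH0.2.le hH1.2.le
  have key : ∀ l < 2, Tendsto (fun T : ℝ => a l T) atTop (nhds 1) := by
    intro l hl
    have hB := hpB l hl
    have hqp : q < pB l := by
      rcases lt_min_iff.1 hqpB with ⟨h0, h1⟩
      interval_cases l <;> assumption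
    have harg := arg_tendsto (pB l) q (Qinv δ) hB.1 hB.2 hq0 hq1 hqp
    have hcomp := gaussQ_tendsto.comp harg
    refine hcomp.congr fun T => ?_
    rw [ha l hl T, hη T]
    simp [Function.comp]
  have h0 := key 0 (by norm_num)
  have h1 := key 1 (by norm_num)
  have := ((h0.const_mul P0).add (h1.const_mul P1))
  simpa [hP] using this
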